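/- Let Z and X be compact metric spaces and let L : C(Z,ℝ) → C(X,ℝ) be a linear map satisfying: (i) there exists C > 0 such that for every continuous f : X → ℝ there is a continuous g : Z → ℝ with L(g) = f and ‖g‖ ≤ C·‖f‖ (i.e. L is surjective and open with respect to the sup-norm topologies); (ii) for every finite subset Z' of Z there exists a finite subset X' of X such that for every continuous f : X → ℝ vanishing at every point of X' and every δ > 0 there is a continuous g : Z → ℝ vanishing at every point of Z' with ‖f − L(g)‖ < δ. Then L is an open map with respect to the topologies of pointwise convergence on C(Z,ℝ) and C(X,ℝ). -/

import Mathlib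

open Topology

/-- The topology of pointwise convergence on `C(T, ℝ)`: the topology induced from the
product topology on `ℝ^T` via the canonical injection. -/
def cpTop (T : Type*) [TopologicalSpace T] : TopologicalSpace C(T, ℝ) :=
  TopologicalSpace.induced (fun f => (f : T → ℝ)) Pi.topologicalSpace

/-- A subset `A` of a topological space is zero-dimensional if the subspace `A` has a
topological base consisting of sets clopen in `A`. -/
def ZeroDimSubset {X : Type*} [TopologicalSpace X] (A : Set X) : Prop :=
  ∀ (a : A) (U : Set A), IsOpen U → a ∈ U → ∃ V : Set A, IsClopen V ∧ a ∈ V ∧ V ⊆ U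

/-- Neighborhood basis for the topology of pointwise convergence: a set is a neighborhood
of `g` iff it contains a basic set determined by a finite set of points and an `ε > 0`. -/
lemma cp_mem_nhds {T : Type*} [TopologicalSpace T] (g : C(T, ℝ)) (s : Set C(T, ℝ)) :
    s ∈ @nhds _ (cpTop T) g ↔
      ∃ (F : Finset T) (ε : ℝ), 0 < ε ∧
        {g' : C(T, ℝ) | ∀ t ∈ F, |g' t - g t| < ε} ⊆ s := by
  rw [cpTop, nhds_induced, Filter.mem_comap]
  constructor
  · rintro ⟨t, ht, hsub⟩
    rw [nhds_pi, Filter.mem_pi'] at ht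
    obtain ⟨I, V, hV, hVsub⟩ := ht
    have hch : ∀ i : T, ∃ ε > 0, Metric.ball (g i) ε ⊆ V i := fun i =>
      Metric.mem_nhds_iff.mp (hV i)
    choose εf hεf hball using hch
    rcases I.eq_empty_or_nonempty with rfl | hI
    · refine ⟨∅, 1, one_pos, fun g' _ => hsub ?_⟩
      exact hVsub (by simp)
    · refine ⟨I, I.inf' hI εf, by simp [Finset.lt_inf'_iff, hεf], fun g' hg' => hsub ?_⟩
      refine hVsub fun i hi => hball i ?_
      rw [Metric.mem_ball, Real.dist_eq]
      exact lt_of_lt_of_le (hg' i hi) (Finset.inf'_le _ hi)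
  · rintro ⟨F, ε, hε, hsub⟩
    refine ⟨⋂ i ∈ F, (fun h : T → ℝ => h i) ⁻¹' Metric.ball (g i) ε, ?_, fun g' hg' => hsub ?_⟩
    · refine (Filter.biInter_finset_mem F).mpr fun i _ => ?_
      exact (continuous_apply i).continuousAt.preimage_mem_nhds
        (Metric.ball_mem_nhds _ hε)
    · intro i hi
      have := Set.mem_iInter₂.mp hg' i hi
      simpa [Real.dist_eq] using this

/-- Abstract openness criterion, approximate version: a linear `L : C(Z, ℝ) → C(X, ℝ)` which
is surjective and open for the sup-norm topologies (witnessed by a uniform bound `C`), and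
such that every function vanishing on a suitable finite set `X'` can be sup-norm
approximated by `L g` with `g` vanishing on a prescribed finite set `Z'`, is open for the
topologies of pointwise convergence. -/
theorem statement11 {Z X : Type*} [MetricSpace Z] [CompactSpace Z]
    [MetricSpace X] [CompactSpace X]
    (L : C(Z, ℝ) →ₗ[ℝ] C(X, ℝ))
    (h1 : ∃ C : ℝ, 0 < C ∧ ∀ f : C(X, ℝ), ∃ g : C(Z, ℝ), L g = f ∧ ‖g‖ ≤ C * ‖f‖)
    (h2 : ∀ Z' : Set Z, Z'.Finite → ∃ X' : Set X, X'.Finite ∧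
      ∀ f : C(X, ℝ), (∀ x ∈ X', f x = 0) → ∀ δ : ℝ, 0 < δ →
        ∃ g : C(Z, ℝ), (∀ z ∈ Z', g z = 0) ∧ ‖f - L g‖ < δ) :
    @IsOpenMap _ _ (cpTop Z) (cpTop X) L := by
  obtain ⟨C, hC, hCs⟩ := h1
  intro U hU
  rw [@isOpen_iff_mem_nhds _ (cpTop X)]
  rintro f ⟨g, hgU, rfl⟩
  have hUnhds : U ∈ @nhds _ (cpTop Z) g := @IsOpen.mem_nhds _ (cpTop Z) _ _ hU hgU
  rw [cp_mem_nhds] at hUnhds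
  obtain ⟨F, ε, hε, hFsub⟩ := hUnhds
  obtain ⟨X', hX'fin, hX'⟩ := h2 (F : Set Z) F.finite_toSet
  rw [cp_mem_nhds]
  have hε' : (0:ℝ) < ε / (2 * C) := by positivity
  refine ⟨hX'fin.toFinset, ε / (2 * C), hε', ?_⟩
  intro f' hf'
  set f0 : C(X, ℝ) := f' - L g with hf0
  -- Tietze: extend f0 restricted to X' with equal norm
  have : Finite ↥X' := hX'fin.to_subtype
  obtain ⟨hb, hbnorm, hbres⟩ :=
    BoundedContinuousFunction.exists_norm_eq_restrict_eq_of_closed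
      (BoundedContinuousFunction.mkOfCompact (f0.restrict X')) hX'fin.isClosed
  set h : C(X, ℝ) := hb.toContinuousMap with hh
  have hres : ∀ x ∈ X', h x = f0 x := by
    intro x hx
    have := congrArg (fun u => u ⟨x, hx⟩) (congrArg DFunLike.coe hbres)
    simpa [hh] using this
  have hhnorm : ‖h‖ < ε / (2 * C) := by
    rw [ContinuousMap.norm_lt_iff _ hε']
    intro x
    calc ‖h x‖ ≤ ‖hb‖ := hb.norm_coe_le_norm x
    _ = ‖BoundedContinuousFunction.mkOfCompact (f0.restrict X')‖ := hbnorm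
    _ < ε / (2 * C) := by
        rw [BoundedContinuousFunction.norm_mkOfCompact,
          ContinuousMap.norm_lt_iff _ hε']
        rintro ⟨x, hx⟩
        have := hf' x (hX'fin.mem_toFinset.mpr hx)
        simpa [f0, Real.norm_eq_abs] using this
  obtain ⟨ga, hga0, hganorm⟩ := hX' (f0 - h)
    (fun x hx => by simp [hres x hx]) (ε / (2 * C)) hε'
  obtain ⟨gb, hgb, hgbnorm⟩ := hCs (f0 - L ga)
  have hnormsum : ‖f0 - L ga‖ < ε / C := by
    have : f0 - L ga = h + ((f0 - h) - L ga) := by ring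
    rw [this]
    calc ‖h + ((f0 - h) - L ga)‖ ≤ ‖h‖ + ‖(f0 - h) - L ga‖ := norm_add_le _ _
    _ < ε / (2 * C) + ε / (2 * C) := add_lt_add hhnorm hganorm
    _ = ε / C := by field_simp; ring
  refine ⟨g + ga + gb, hFsub ?_, ?_⟩
  · intro z hz
    have h1 : (g + ga + gb) z - g z = gb z := by
      simp [hga0 z hz]
    rw [h1]
    calc |gb z| ≤ ‖gb‖ := gb.norm_coe_le_norm z
    _ ≤ C * ‖f0 - L ga‖ := hgbnorm
    _ < C * (ε / C) := by exact mul_lt_mul_of_pos_left hnormsum hC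
    _ = ε := by field_simp
  · simp only [map_add, hgb, hf0]
    ring
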